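/- Toy example where delay makes buy and hold strictly better: let X(0), X(1), X(2) be i.i.d. with P(X(k) = 0.8) = P(X(k) = −0.2) = 1/2, let v > 0, and let K = 1/1.8. With one-step execution delay, define the high-frequency trader's account by V₁(0) = V₁(1) = v and V₁(k+1) = V₁(k) + K·(1 + X(k−1))·V₁(k−1)·X(k) for k = 1, 2, and the buy-and-holder's terminal account by Vₙ(3) = (1 + K·(1 + X(0))·((1 + X(1))·(1 + X(2)) − 1))·v. Then E[log Vₙ(3)] > E[log V₁(3)]. -/

import Mathlib

open MeasureTheory ProbabilityTheory Real

section Aux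
open ENNReal

noncomputable def tval (b : Bool) : ℝ := if b then 0.8 else -0.2

def cube {Ω : Type*} (X : ℕ → Ω → ℝ) (s : Bool × Bool × Bool) : Set Ω :=
  {ω | X 0 ω = tval s.1 ∧ X 1 ω = tval s.2.1 ∧ X 2 ω = tval s.2.2}

lemma key_int {Ω : Type*} [MeasureSpace Ω] [IsProbabilityMeasure (ℙ : Measure Ω)]
    (X : ℕ → Ω → ℝ) (hmeas : ∀ i, Measurable (X i))
    (hindep : iIndepFun
      (fun i : Fin 3 => X i) ℙ)
    (hmax : ∀ i < 3, ℙ {ω | X i ω = 0.8} = 1 / 2)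
    (hmin : ∀ i < 3, ℙ {ω | X i ω = -0.2} = 1 / 2)
    (F : Ω → ℝ) (c : Bool × Bool × Bool → ℝ)
    (hF : ∀ ω (s : Bool × Bool × Bool), X 0 ω = tval s.1 → X 1 ω = tval s.2.1 →
      X 2 ω = tval s.2.2 → F ω = c s) :
    ∫ ω, F ω ∂ℙ = ∑ s : Bool × Bool × Bool, (1/8 : ℝ) * c s := by
  have hAm : ∀ s, MeasurableSet (cube X s) := by
    intro s
    have : cube X s = X 0 ⁻¹' {tval s.1} ∩ (X 1 ⁻¹' {tval s.2.1} ∩ X 2 ⁻¹' {tval s.2.2}) := rfl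
    rw [this]
    exact ((hmeas 0) (measurableSet_singleton _)).inter
      (((hmeas 1) (measurableSet_singleton _)).inter ((hmeas 2) (measurableSet_singleton _)))
  have hhalf : ∀ i, i < 3 → ∀ b : Bool, ℙ (X i ⁻¹' {tval b}) = 1/2 := by
    intro i hi b
    cases b
    · show ℙ {ω | X i ω = tval false} = 1/2
      simpa [tval] using hmin i hi
    · show ℙ {ω | X i ω = tval true} = 1/2
      simpa [tval] using hmax i hi
  have hA : ∀ s, ℙ (cube X s) = 1/8 := by
    intro s
    have h8 := hindep.measure_inter_preimage_eq_mul Finset.univ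
      (sets := ![{tval s.1}, {tval s.2.1}, {tval s.2.2}])
      (fun i _ => by fin_cases i <;> exact measurableSet_singleton _)
    have hset : (⋂ i ∈ Finset.univ, X (i : Fin 3) ⁻¹' ![{tval s.1}, {tval s.2.1}, {tval s.2.2}] i)
        = cube X s := by
      ext ω
      simp [cube, Fin.forall_fin_succ, and_assoc]
    rw [hset] at h8
    rw [Fin.prod_univ_three] at h8
    simp only [Matrix.cons_val_zero, Matrix.cons_val_one, Matrix.head_cons,
      Matrix.cons_val_two, Matrix.tail_cons,
      show ((0 : Fin 3) : ℕ) = 0 from rfl, show ((1 : Fin 3) : ℕ) = 1 from rfl,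
      show ((2 : Fin 3) : ℕ) = 2 from rfl] at h8
    rw [hhalf 0 (by norm_num) s.1, hhalf 1 (by norm_num) s.2.1,
      hhalf 2 (by norm_num) s.2.2] at h8
    rw [h8]
    rw [show ((1:ℝ≥0∞)/2) = 2⁻¹ by simp, show ((1:ℝ≥0∞)/8) = 8⁻¹ by simp]
    rw [← ENNReal.mul_inv (by norm_num) (by norm_num), ← ENNReal.mul_inv (by norm_num) (by norm_num)]
    norm_num
  have h01 : ∀ i, i < 3 → ∀ᵐ ω ∂(ℙ : Measure Ω), X i ω = 0.8 ∨ X i ω = -0.2 := by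
    intro i hi
    rw [ae_iff]
    have hset : {ω | ¬(X i ω = 0.8 ∨ X i ω = -0.2)}
        = ({ω | X i ω = 0.8} ∪ {ω | X i ω = -0.2})ᶜ := by
      ext ω; simp [not_or]
    rw [hset]
    have hdisj : Disjoint {ω | X i ω = 0.8} {ω | X i ω = -0.2} := by
      rw [Set.disjoint_left]
      intro ω h1 h2
      simp only [Set.mem_setOf_eq] at h1 h2
      rw [h1] at h2; norm_num at h2
    have hms1 : MeasurableSet {ω | X i ω = (0.8:ℝ)} := (hmeas i) (measurableSet_singleton _)
    have hms2 : MeasurableSet {ω | X i ω = (-0.2:ℝ)} := (hmeas i) (measurableSet_singleton _)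
    have hU : ℙ ({ω | X i ω = 0.8} ∪ {ω | X i ω = -0.2}) = 1 := by
      rw [measure_union hdisj hms2, hmax i hi, hmin i hi,
        show ((1:ℝ≥0∞)/2) = 2⁻¹ by simp]
      exact ENNReal.inv_two_add_inv_two
    exact (prob_compl_eq_zero_iff (hms1.union hms2)).mpr hU
  have hae : ∀ᵐ ω ∂(ℙ : Measure Ω), (X 0 ω = 0.8 ∨ X 0 ω = -0.2) ∧
      (X 1 ω = 0.8 ∨ X 1 ω = -0.2) ∧ (X 2 ω = 0.8 ∨ X 2 ω = -0.2) :=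
    ((h01 0 (by norm_num)).and ((h01 1 (by norm_num)).and (h01 2 (by norm_num))))
  have hFeq : F =ᵐ[ℙ] fun ω => ∑ s : Bool × Bool × Bool,
      (cube X s).indicator (fun _ => c s) ω := by
    filter_upwards [hae] with ω ⟨h0, h1, h2⟩
    rcases h0 with h0 | h0 <;> rcases h1 with h1 | h1 <;> rcases h2 with h2 | h2
    · rw [hF ω (true, true, true) (by simp [tval, h0]) (by simp [tval, h1]) (by simp [tval, h2])]
      norm_num [Fintype.sum_prod_type, Fintype.sum_bool, Set.indicator_apply, cube,
        Set.mem_setOf_eq, h0, h1, h2, tval]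
    · rw [hF ω (true, true, false) (by simp [tval, h0]) (by simp [tval, h1]) (by simp [tval, h2])]
      norm_num [Fintype.sum_prod_type, Fintype.sum_bool, Set.indicator_apply, cube,
        Set.mem_setOf_eq, h0, h1, h2, tval]
    · rw [hF ω (true, false, true) (by simp [tval, h0]) (by simp [tval, h1]) (by simp [tval, h2])]
      norm_num [Fintype.sum_prod_type, Fintype.sum_bool, Set.indicator_apply, cube,
        Set.mem_setOf_eq, h0, h1, h2, tval]
    · rw [hF ω (true, false, false) (by simp [tval, h0]) (by simp [tval, h1]) (by simp [tval, h2])]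
      norm_num [Fintype.sum_prod_type, Fintype.sum_bool, Set.indicator_apply, cube,
        Set.mem_setOf_eq, h0, h1, h2, tval]
    · rw [hF ω (false, true, true) (by simp [tval, h0]) (by simp [tval, h1]) (by simp [tval, h2])]
      norm_num [Fintype.sum_prod_type, Fintype.sum_bool, Set.indicator_apply, cube,
        Set.mem_setOf_eq, h0, h1, h2, tval]
    · rw [hF ω (false, true, false) (by simp [tval, h0]) (by simp [tval, h1]) (by simp [tval, h2])]
      norm_num [Fintype.sum_prod_type, Fintype.sum_bool, Set.indicator_apply, cube,
        Set.mem_setOf_eq, h0, h1, h2, tval]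
    · rw [hF ω (false, false, true) (by simp [tval, h0]) (by simp [tval, h1]) (by simp [tval, h2])]
      norm_num [Fintype.sum_prod_type, Fintype.sum_bool, Set.indicator_apply, cube,
        Set.mem_setOf_eq, h0, h1, h2, tval]
    · rw [hF ω (false, false, false) (by simp [tval, h0]) (by simp [tval, h1]) (by simp [tval, h2])]
      norm_num [Fintype.sum_prod_type, Fintype.sum_bool, Set.indicator_apply, cube,
        Set.mem_setOf_eq, h0, h1, h2, tval]
  calc ∫ ω, F ω ∂ℙ
      = ∫ ω, (∑ s : Bool × Bool × Bool, (cube X s).indicator (fun _ => c s) ω) ∂ℙ :=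
        integral_congr_ae hFeq
    _ = ∑ s : Bool × Bool × Bool, ∫ ω, (cube X s).indicator (fun _ => c s) ω ∂ℙ :=
        integral_finset_sum _ (fun s _ => (integrable_const (c s)).indicator (hAm s))
    _ = ∑ s : Bool × Bool × Bool, (1/8 : ℝ) * c s := by
        refine Finset.sum_congr rfl fun s _ => ?_
        rw [integral_indicator_const _ (hAm s), measureReal_def, hA s]
        rw [smul_eq_mul]
        norm_num [ENNReal.toReal_div]

noncomputable def Bval (s : Bool × Bool × Bool) : ℝ :=
  1 + (1 / 1.8) * (1 + tval s.1) * ((1 + tval s.2.1) * (1 + tval s.2.2) - 1)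

noncomputable def Hval (s : Bool × Bool × Bool) : ℝ :=
  1 + (1 / 1.8) * (1 + tval s.1) * tval s.2.1 + (1 / 1.8) * (1 + tval s.2.1) * tval s.2.2

end Aux

/-- Account value of the one-step-delayed high-frequency trader with Kelly
fraction `K`, initial value `v` and return sequence `X`:
`V 0 = V 1 = v` and `V (k+1) = V k + I k * X k` for `k ≥ 1`, where
`I k = K * (1 + X (k-1)) * V (k-1)` is the investment executed at stage `k`. -/
noncomputable def delayedAcct (K v : ℝ) (X : ℕ → ℝ) : ℕ → ℝ
  | 0 => v
  | 1 => v
  | (k + 2) => delayedAcct K v X (k + 1)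
      + (K * (1 + X k) * delayedAcct K v X k) * X (k + 1)

lemma dA3 (K v : ℝ) (X : ℕ → ℝ) :
    delayedAcct K v X 3 = v + (K * (1 + X 0) * v) * X 1 + (K * (1 + X 1) * v) * X 2 := by
  show delayedAcct K v X (1 + 2) = _
  rw [delayedAcct]
  show delayedAcct K v X (0 + 2) + _ = _
  rw [delayedAcct]
  rfl

/-- **Toy example where delay makes buy and hold strictly better.** Let
`X 0, X 1, X 2` be i.i.d. with `P(X k = 0.8) = P(X k = -0.2) = 1/2`, let
`v > 0`, and take the Kelly fraction `K = 1/1.8` (the largest fraction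
consistent with self-financing under one-step delay).  The one-step-delayed
high-frequency trader's account is `V₁ 0 = V₁ 1 = v` and
`V₁ (k+1) = V₁ k + K·(1 + X (k-1))·V₁ (k-1)·X k` for `k = 1, 2`, while the
one-step-delayed buy-and-holder's terminal account is
`Vₙ 3 = (1 + K·(1 + X 0)·((1 + X 1)·(1 + X 2) - 1))·v`.  Then
`E[log (Vₙ 3)] > E[log (V₁ 3)]`. -/
theorem delayed_buy_hold_beats_high_frequency_toy
    {Ω : Type*} [MeasureSpace Ω] [IsProbabilityMeasure (ℙ : Measure Ω)]
    (X : ℕ → Ω → ℝ) (hmeas : ∀ i, Measurable (X i))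
    (hindep : iIndepFun
      (fun i : Fin 3 => X i) ℙ)
    (hmax : ∀ i < 3, ℙ {ω | X i ω = 0.8} = 1 / 2)
    (hmin : ∀ i < 3, ℙ {ω | X i ω = -0.2} = 1 / 2)
    (v : ℝ) (hv : 0 < v) :
    (∫ ω, Real.log
        ((1 + (1 / 1.8) * (1 + X 0 ω) * ((1 + X 1 ω) * (1 + X 2 ω) - 1)) * v) ∂ℙ)
      > ∫ ω, Real.log (delayedAcct (1 / 1.8) v (fun k => X k ω) 3) ∂ℙ := by
  have hBpos : ∀ s, 0 < Bval s := by
    rintro ⟨a, b, c⟩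
    cases a <;> cases b <;> cases c <;> norm_num [Bval, tval]
  have hHpos : ∀ s, 0 < Hval s := by
    rintro ⟨a, b, c⟩
    cases a <;> cases b <;> cases c <;> norm_num [Hval, tval]
  rw [key_int X hmeas hindep hmax hmin _ (fun s => Real.log (Bval s * v))
    (fun ω s h0 h1 h2 => by rw [h0, h1, h2]; rfl)]
  rw [key_int X hmeas hindep hmax hmin _ (fun s => Real.log (Hval s * v))
    (fun ω s h0 h1 h2 => by
      rw [dA3]
      simp only [h0, h1, h2]
      congr 1
      simp only [Hval]
      ring)]
  rw [← Finset.mul_sum, ← Finset.mul_sum]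
  have key : (∑ s : Bool × Bool × Bool, Real.log (Hval s * v))
      < ∑ s : Bool × Bool × Bool, Real.log (Bval s * v) := by
    rw [← Real.log_prod (fun s _ => ne_of_gt (mul_pos (hHpos s) hv)),
      ← Real.log_prod (fun s _ => ne_of_gt (mul_pos (hBpos s) hv))]
    apply Real.log_lt_log
    · exact Finset.prod_pos fun s _ => mul_pos (hHpos s) hv
    · rw [Finset.prod_mul_distrib, Finset.prod_mul_distrib, Finset.prod_const]
      apply mul_lt_mul_of_pos_right
      · norm_num [Fintype.prod_prod_type, Fintype.prod_bool, Bval, Hval, tval]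
      · exact pow_pos hv _
  linarith
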